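/- Let ε > 0 and set x*(ε) = (ε·e^ε + sqrt(2 − (4 − ε²)·e^ε + 2·e^{2ε})) / (ε·e^ε − ε). Then for every real x ≥ 1, |f_ε(x)| ≤ f_ε(x*(ε)), where f_ε(x) = x·(g_ε(x − 1) − g_ε(x)) + (1 − g_ε(x − 1)) and g_ε(x) = (exp(−ε·x)/2)·(1 + ε·x/2). (In particular the quantity 2 − (4 − ε²)·e^ε + 2·e^{2ε} under the square root is nonnegative and the denominator ε·e^ε − ε is positive.) -/

import Mathlib

open Real

/-- `g_ε(x) = (exp(−ε·x)/2)·(1 + ε·x/2)`. -/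
noncomputable def gFn (ε x : ℝ) : ℝ := Real.exp (-ε * x) / 2 * (1 + ε * x / 2)

/-- `f_ε(x) = x·(g_ε(x − 1) − g_ε(x)) + (1 − g_ε(x − 1))`. -/
noncomputable def fFn (ε x : ℝ) : ℝ :=
  x * (gFn ε (x - 1) - gFn ε x) + (1 - gFn ε (x - 1))

/-- `x*(ε) = (ε·e^ε + sqrt(2 − (4 − ε²)·e^ε + 2·e^{2ε})) / (ε·e^ε − ε)`. -/
noncomputable def xstar (ε : ℝ) : ℝ :=
  (ε * Real.exp ε + Real.sqrt (2 - (4 - ε ^ 2) * Real.exp ε + 2 * Real.exp (2 * ε))) /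
    (ε * Real.exp ε - ε)

lemma gFn_hasDerivAt (ε y : ℝ) :
    HasDerivAt (gFn ε) (-(ε / 4) * Real.exp (-ε * y) * (1 + ε * y)) y := by
  have h1 : HasDerivAt (fun y : ℝ => -ε * y) (-ε) y := by
    simpa using (hasDerivAt_id y).const_mul (-ε)
  have h2 := (h1.exp).div_const 2
  have h3 : HasDerivAt (fun y : ℝ => 1 + ε * y / 2) (ε / 2) y := by
    simpa using ((hasDerivAt_id y).const_mul ε).div_const 2 |>.const_add 1
  have h4 := h2.mul h3
  have : HasDerivAt (gFn ε)
      (Real.exp (-ε * y) * -ε / 2 * (1 + ε * y / 2) + Real.exp (-ε * y) / 2 * (ε / 2)) y := h4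
  convert this using 1
  ring

lemma fFn_hasDerivAt (ε x : ℝ) :
    HasDerivAt (fFn ε)
      (Real.exp (-ε * x) / 2 *
        ((Real.exp ε - 1) + ε ^ 2 / 2 * (x ^ 2 - Real.exp ε * (x - 1) ^ 2))) x := by
  have hsub : HasDerivAt (fun x : ℝ => x - 1) 1 x := (hasDerivAt_id x).sub_const 1
  have hgc : HasDerivAt (fun x : ℝ => gFn ε (x - 1))
      (-(ε / 4) * Real.exp (-ε * (x - 1)) * (1 + ε * (x - 1)) * 1) x :=
    by have := (gFn_hasDerivAt ε (x - 1)).comp x hsub; exact this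
  have hg := gFn_hasDerivAt ε x
  have h := ((hasDerivAt_id x).mul (hgc.sub hg)).add ((hasDerivAt_const x (1:ℝ)).sub hgc)
  refine HasDerivAt.congr_deriv h ?_
  have hA : Real.exp (-ε * (x - 1)) = Real.exp ε * Real.exp (-ε * x) := by
    rw [← Real.exp_add]; ring_nf
  unfold gFn
  rw [hA]
  simp only [id_eq, Pi.sub_apply, hA]
  ring

/-- The maximum of `|f_ε|` on `[1, ∞)` is attained at `x*(ε)`; moreover the radicand in
`x*(ε)` is nonnegative and its denominator is positive. -/
theorem abs_fFn_le_fFn_xstar (ε : ℝ) (hε : 0 < ε) :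
    0 ≤ 2 - (4 - ε ^ 2) * Real.exp ε + 2 * Real.exp (2 * ε) ∧
    0 < ε * Real.exp ε - ε ∧
    ∀ x : ℝ, 1 ≤ x → |fFn ε x| ≤ fFn ε (xstar ε) := by
  set A := Real.exp ε with hA
  have hA1 : 1 < A := by
    rw [hA, show (1:ℝ) = Real.exp 0 by simp]
    exact Real.exp_lt_exp.mpr hε
  have hApos : 0 < A := lt_trans one_pos hA1
  have hA2 : Real.exp (2 * ε) = A ^ 2 := by
    rw [two_mul, Real.exp_add, hA, sq]
  have hrad : 2 - (4 - ε ^ 2) * A + 2 * Real.exp (2 * ε)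
      = ε ^ 2 * A + 2 * (A - 1) ^ 2 := by rw [hA2]; ring
  have hrad0 : 0 ≤ 2 - (4 - ε ^ 2) * Real.exp ε + 2 * Real.exp (2 * ε) := by
    rw [← hA, hrad]
    nlinarith [sq_nonneg (A - 1), mul_pos (mul_pos hε hε) hApos]
  have hden : 0 < ε * A - ε := by nlinarith
  refine ⟨hrad0, hden, ?_⟩
  set s := Real.sqrt (2 - (4 - ε ^ 2) * A + 2 * Real.exp (2 * ε)) with hsdef
  have hs2 : s ^ 2 = ε ^ 2 * A + 2 * (A - 1) ^ 2 := by
    rw [hsdef, Real.sq_sqrt (by rw [← hA] at hrad0; exact hrad0), hrad]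
  have hsε : ε < s := by
    have h1 : ε ^ 2 < s ^ 2 := by
      rw [hs2]; nlinarith [sq_nonneg (A - 1)]
    nlinarith [Real.sqrt_nonneg (2 - (4 - ε ^ 2) * A + 2 * Real.exp (2 * ε))]
  have hxdef : xstar ε = (ε * A + s) / (ε * A - ε) := by rw [xstar]
  have hdne : ε * A - ε ≠ 0 := ne_of_gt hden
  have hx1 : 1 < xstar ε := by
    rw [hxdef, lt_div_iff₀ hden]
    nlinarith
  -- the quadratic Q
  set X := xstar ε with hX
  have hroot : (A - 1) + ε ^ 2 / 2 * (X ^ 2 - A * (X - 1) ^ 2) = 0 := by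
    rw [hxdef]
    have hA1' : A - 1 ≠ 0 := by linarith
    field_simp
    linear_combination (-(A-1)) * hs2
  have hfac : ∀ x : ℝ, (A - 1) + ε ^ 2 / 2 * (x ^ 2 - A * (x - 1) ^ 2)
      = (X - x) * (ε ^ 2 * (A - 1) / 2 * (x + X) - ε ^ 2 * A) := by
    intro x
    linear_combination hroot
  have haX : ε ^ 2 * (A - 1) / 2 * X = ε * (ε * A + s) / 2 := by
    rw [hxdef]
    have hA1' : A - 1 ≠ 0 := by linarith
    field_simp
  have hfacpos : ∀ x : ℝ, 1 ≤ x → 0 < ε ^ 2 * (A - 1) / 2 * (x + X) - ε ^ 2 * A := by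
    intro x hx
    have : ε ^ 2 * (A - 1) / 2 * (x + X) = ε ^ 2 * (A - 1) / 2 * x + ε * (ε * A + s) / 2 := by
      rw [mul_add, haX]
    rw [this]
    nlinarith [mul_pos (mul_pos hε hε) (sub_pos.mpr hA1)]
  -- monotone on [1, X]
  have hcont : ∀ t : Set ℝ, ContinuousOn (fFn ε) t := fun t =>
    fun x _ => ((fFn_hasDerivAt ε x).continuousAt).continuousWithinAt
  have hdiff : ∀ t : Set ℝ, DifferentiableOn ℝ (fFn ε) t := fun t =>
    fun x _ => ((fFn_hasDerivAt ε x).differentiableAt).differentiableWithinAt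
  have hderiv : ∀ x : ℝ, deriv (fFn ε) x
      = Real.exp (-ε * x) / 2 * ((A - 1) + ε ^ 2 / 2 * (x ^ 2 - A * (x - 1) ^ 2)) := by
    intro x; exact (fFn_hasDerivAt ε x).deriv
  have hmono : MonotoneOn (fFn ε) (Set.Icc 1 X) := by
    apply monotoneOn_of_deriv_nonneg (convex_Icc 1 X) (hcont _)
      (fun x hx => hdiff _ x hx)
    intro x hx
    rw [interior_Icc] at hx
    rw [hderiv, hfac]
    have h1 : 0 < Real.exp (-ε * x) / 2 := by positivity
    have h2 : 0 < X - x := sub_pos.mpr hx.2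
    have h3 := hfacpos x hx.1.le
    positivity
  have hanti : AntitoneOn (fFn ε) (Set.Ici X) := by
    apply antitoneOn_of_deriv_nonpos (convex_Ici X) (hcont _)
      (fun x hx => hdiff _ x hx)
    intro x hx
    rw [interior_Ici] at hx
    rw [hderiv, hfac]
    have h2 : X - x < 0 := sub_neg.mpr hx
    have h3 := hfacpos x (le_trans hx1.le (le_of_lt hx))
    have h1 : 0 < Real.exp (-ε * x) / 2 := by positivity
    have h4 : (X - x) * (ε ^ 2 * (A - 1) / 2 * (x + X) - ε ^ 2 * A) < 0 :=
      mul_neg_of_neg_of_pos h2 h3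
    exact le_of_lt (mul_neg_of_pos_of_neg h1 h4)
  -- nonnegativity of fFn on [1, ∞)
  have hfnonneg : ∀ x : ℝ, 1 ≤ x → 0 ≤ fFn ε x := by
    intro x hx
    have hE : Real.exp (-ε * (x - 1)) = A * Real.exp (-ε * x) := by
      rw [hA, ← Real.exp_add]; ring_nf
    set E := Real.exp (-ε * x) with hEdef
    have hE1 : E * (1 + ε * x) ≤ 1 := by
      have h1 : 1 + ε * x ≤ Real.exp (ε * x) := by
        have := Real.add_one_le_exp (ε * x); linarith
      have h2 : E * Real.exp (ε * x) = 1 := by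
        rw [hEdef, ← Real.exp_add, show -ε * x + ε * x = 0 by ring, Real.exp_zero]
      nlinarith [Real.exp_pos (-ε * x), Real.exp_pos (ε * x), hEdef ▸ Real.exp_pos (-ε * x)]
    have hEpos : 0 < E := Real.exp_pos _
    have key : 2 * fFn ε x
        = 2 + E * (A * (x - 1) + A * ε * (x - 1) ^ 2 / 2 - x - ε * x ^ 2 / 2) := by
      unfold fFn gFn
      rw [hE, ← hEdef]
      ring
    have p1 : 0 ≤ E * ((A - 1) * (x - 1)) :=
      mul_nonneg hEpos.le (mul_nonneg (by linarith) (by linarith))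
    have p2 : 0 ≤ E * ((A - 1) * ε * (x - 1) ^ 2) :=
      mul_nonneg hEpos.le (mul_nonneg (mul_nonneg (by linarith) hε.le) (sq_nonneg _))
    have p4 : 0 ≤ E * ε := mul_nonneg hEpos.le hε.le
    have expand : 2 + E * (A * (x - 1) + A * ε * (x - 1) ^ 2 / 2 - x - ε * x ^ 2 / 2)
        = 2 + E * ((A - 1) * (x - 1)) + E * ((A - 1) * ε * (x - 1) ^ 2) / 2
          - E * (1 + ε * x) + E * ε / 2 := by ring
    clear_value E
    linarith [key, expand, p1, p2, p4, hE1]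
  intro x hx
  rw [abs_of_nonneg (hfnonneg x hx)]
  rcases le_total x X with h | h
  · exact hmono ⟨hx, h⟩ ⟨hx1.le, le_refl X⟩ h
  · exact hanti (Set.mem_Ici.mpr (le_refl X)) (Set.mem_Ici.mpr h) h
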